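/- Let AF = (A, R) be a Dung argumentation framework and Γ_AF = A ∪ { a ↣ b : (a,b) ∈ R }. If I is an equilibrium model of Γ_AF, then S_I := { a ∈ A : I ⊨ a } is a stable extension of AF, i.e., S_I = A \ Defeated(S_I) where Defeated(S) = { a : ∃ b ∈ S, (b,a) ∈ R }. -/
import Mathlib


inductive Formula (Atom : Type) : Type
  | bot : Formula Atom
  | atom : Atom → Formula Atom
  | sneg : Formula Atom → Formula Atom
  | conj : Formula Atom → Formula Atom → Formula Atom
  | disj : Formula Atom → Formula Atom → Formula Atom
  | impl : Formula Atom → Formula Atom → Formula Atom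

structure NelsonInterp (Atom : Type) where
  W : Type
  le : W → W → Prop
  refl : ∀ w, le w w
  trans : ∀ {w₁ w₂ w₃}, le w₁ w₂ → le w₂ w₃ → le w₁ w₃
  Vp : W → Set Atom
  Vm : W → Set Atom
  monoP : ∀ {w w'}, le w w' → Vp w ⊆ Vp w'
  monoM : ∀ {w w'}, le w w' → Vm w ⊆ Vm w'

mutual
  def forceP {Atom : Type} (I : NelsonInterp Atom) (w : I.W) : Formula Atom → Prop
    | .bot => False
    | .atom a => a ∈ I.Vp w
    | .sneg φ => forceM I w φ
    | .conj φ ψ => forceP I w φ ∧ forceP I w ψ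
    | .disj φ ψ => forceP I w φ ∨ forceP I w ψ
    | .impl φ ψ => ∀ w', I.le w w' → (¬ forceP I w' φ ∨ forceP I w' ψ)
  def forceM {Atom : Type} (I : NelsonInterp Atom) (w : I.W) : Formula Atom → Prop
    | .bot => True
    | .atom a => a ∈ I.Vm w
    | .sneg φ => forceP I w φ
    | .conj φ ψ => forceM I w φ ∨ forceM I w ψ
    | .disj φ ψ => forceM I w φ ∧ forceM I w ψ
    | .impl φ ψ => forceP I w φ ∧ forceM I w ψ
end

def Formula.neg {Atom : Type} (φ : Formula Atom) : Formula Atom := φ.impl .bot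

def Formula.supImp {Atom : Type} (φ ψ : Formula Atom) : Formula Atom :=
  ((φ.sneg.neg).conj φ).impl ψ

def Formula.attack {Atom : Type} (φ ψ : Formula Atom) : Formula Atom :=
  φ.supImp ψ.sneg

/-- cw-inference at a world: `I,w ⊨ φ` iff `I,w ⊩⁺ ¬~φ ∧ φ`. -/
def cw {Atom : Type} (I : NelsonInterp Atom) (w : I.W) (φ : Formula Atom) : Prop :=
  forceP I w ((φ.sneg.neg).conj φ)

/-- `I ⊩⁺ φ` : forcing at all worlds. -/
def forcedP {Atom : Type} (I : NelsonInterp Atom) (φ : Formula Atom) : Prop :=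
  ∀ w, forceP I w φ

def forcedM {Atom : Type} (I : NelsonInterp Atom) (φ : Formula Atom) : Prop :=
  ∀ w, forceM I w φ

/-- `I ⊨ φ` : cw-inference at all worlds. -/
def cwAll {Atom : Type} (I : NelsonInterp Atom) (φ : Formula Atom) : Prop :=
  ∀ w, cw I w φ

def NelsonInterp.Consistent {Atom : Type} (I : NelsonInterp Atom) : Prop :=
  ∀ w, I.Vp w ∩ I.Vm w = ∅

/-- An HT-interpretation: two worlds h ≤ t, given by four sets of atoms. -/
structure HTInterp (Atom : Type) where
  Hp : Set Atom
  Hm : Set Atom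
  Tp : Set Atom
  Tm : Set Atom
  subP : Hp ⊆ Tp
  subM : Hm ⊆ Tm

/-- The underlying Nelson interpretation: world `false` is h, world `true` is t. -/
def HTInterp.toNelson {Atom : Type} (I : HTInterp Atom) : NelsonInterp Atom where
  W := Bool
  le := (· ≤ ·)
  refl := le_refl
  trans := le_trans
  Vp := fun w => if w then I.Tp else I.Hp
  Vm := fun w => if w then I.Tm else I.Hm
  monoP := by
    intro w w' hle
    match w, w', hle with
    | false, false, _ => exact subset_rfl
    | false, true, _ => exact I.subP
    | true, true, _ => exact subset_rfl
    | true, false, h => exact absurd h (by decide)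
  monoM := by
    intro w w' hle
    match w, w', hle with
    | false, false, _ => exact subset_rfl
    | false, true, _ => exact I.subM
    | true, true, _ => exact subset_rfl
    | true, false, h => exact absurd h (by decide)


def isHTModel {Atom : Type} (I : HTInterp Atom) (Γ : Set (Formula Atom)) : Prop :=
  ∀ φ ∈ Γ, ∀ w : Bool, forceP I.toNelson w φ

/-- The arguments consistently accepted by `I` among the arguments `A`. -/
def SI {Atom : Type} (I : HTInterp Atom) (A : Set Atom) : Set Atom :=
  { a ∈ A | cwAll I.toNelson (Formula.atom a) }

/-- `I` is total and a ≤-minimal HT-model among models with the same `t`-valuations. -/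
def Equilibrium {Atom : Type} (I : HTInterp Atom) (Γ : Set (Formula Atom)) : Prop :=
  I.Hp = I.Tp ∧ I.Hm = I.Tm ∧ isHTModel I Γ ∧
    ∀ J : HTInterp Atom, J.Tp = I.Tp → J.Tm = I.Tm → isHTModel J Γ →
      J.Hp = I.Tp ∧ J.Hm = I.Tm

/-- Translation of the Dung framework `(A, R)`. -/
def ThAF {Atom : Type} (A : Set Atom) (R : Atom → Atom → Prop) : Set (Formula Atom) :=
  (Formula.atom '' A) ∪
    { f | ∃ a b, R a b ∧ f = (Formula.atom a).attack (Formula.atom b) }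

def Defeated {Atom : Type} (R : Atom → Atom → Prop) (S : Set Atom) : Set Atom :=
  { a | ∃ b ∈ S, R b a }

theorem af_equilibrium_to_stable {Atom : Type} (A : Set Atom)
    (R : Atom → Atom → Prop) (hR : ∀ a b, R a b → a ∈ A ∧ b ∈ A)
    (I : HTInterp Atom) (hEq : Equilibrium I (ThAF A R)) :
    SI I A = A \ Defeated R (SI I A) := by
  obtain ⟨hHp, hHm, hMod, hMin⟩ := hEq
  have hATp : ∀ a ∈ A, a ∈ I.Tp := by
    intro a ha
    have := hMod (Formula.atom a) (Or.inl ⟨a, ha, rfl⟩) true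
    simpa [forceP, HTInterp.toNelson] using this
  have hSI : ∀ a, a ∈ SI I A ↔ a ∈ A ∧ a ∈ I.Tp ∧ a ∉ I.Tm := by
    intro a
    constructor
    · rintro ⟨haA, hcw⟩
      have := hcw true
      simp [cw, forceP, forceM, HTInterp.toNelson, Formula.neg] at this
      exact ⟨haA, this.2, this.1⟩
    · rintro ⟨haA, hTp, hTm⟩
      refine ⟨haA, fun w => ?_⟩
      simp only [cw, forceP, forceM, HTInterp.toNelson, Formula.neg]
      constructor
      · intro w' _
        left
        cases w' <;> simp [hHm] <;> exact hTm
      · cases w <;> simp [hHp] <;> exact hTp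
  have hAtk : ∀ a b, R a b → a ∈ I.Tp → a ∉ I.Tm → b ∈ I.Tm := by
    intro a b hab hTp hTm
    have h := hMod ((Formula.atom a).attack (Formula.atom b))
      (Or.inr ⟨a, b, hab, rfl⟩) true
    simp only [Formula.attack, Formula.supImp, Formula.neg, forceP, forceM,
      HTInterp.toNelson] at h
    rcases h true (le_refl _) with h | h
    · exfalso
      apply h
      constructor
      · intro w'' _
        left
        cases w'' <;> simp [hHm] <;> exact hTm
      · simpa using hTp
    · simpa using h
  have hJmod : isHTModel
      ⟨I.Tp, Defeated R (SI I A) ∩ I.Tm, I.Tp, I.Tm, subset_rfl,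
        Set.inter_subset_right⟩ (ThAF A R) := by
    rintro φ (⟨a, haA, rfl⟩ | ⟨a, b, hab, rfl⟩) w
    · cases w <;> simp [forceP, HTInterp.toNelson] <;> exact hATp a haA
    · simp only [Formula.attack, Formula.supImp, Formula.neg, forceP, forceM,
        HTInterp.toNelson]
      intro w' _
      by_cases hP : a ∈ I.Tp ∧ a ∉ I.Tm
      · right
        obtain ⟨haTp, haTm⟩ := hP
        have hbTm : b ∈ I.Tm := hAtk a b hab haTp haTm
        have hbD : b ∈ Defeated R (SI I A) :=
          show ∃ c ∈ SI I A, R c b from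
            ⟨a, (hSI a).2 ⟨(hR a b hab).1, haTp, haTm⟩, hab⟩
        cases w'
        · simpa using (⟨hbD, hbTm⟩ : b ∈ Defeated R (SI I A) ∩ I.Tm)
        · simpa using hbTm
      · left
        rintro ⟨h1, h2⟩
        apply hP
        refine ⟨by cases w' <;> simpa using h2, fun hTm => ?_⟩
        rcases h1 true (by cases w' <;> decide) with h | h
        · exact h (by simpa using hTm)
        · exact h
  have hMinJ : Defeated R (SI I A) ∩ I.Tm = I.Tm :=
    (hMin ⟨I.Tp, Defeated R (SI I A) ∩ I.Tm, I.Tp, I.Tm, subset_rfl,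
      Set.inter_subset_right⟩ rfl rfl hJmod).2
  have hTmD : I.Tm ⊆ Defeated R (SI I A) := by
    intro x hx
    have : x ∈ Defeated R (SI I A) ∩ I.Tm := by rw [hMinJ]; exact hx
    exact this.1
  ext a
  rw [hSI a]
  constructor
  · rintro ⟨haA, hTp, hTm⟩
    refine ⟨haA, fun hdef => ?_⟩
    obtain ⟨b, hbSI, hba⟩ := hdef
    obtain ⟨_, hbTp, hbTm⟩ := (hSI b).1 hbSI
    exact hTm (hAtk b a hba hbTp hbTm)
  · rintro ⟨haA, hndef⟩
    exact ⟨haA, hATp a haA, fun hTm => hndef (hTmD hTm)⟩
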